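/- Let R be a finite (not necessarily unital, not necessarily commutative) ring with |R| > 1, let p be the smallest prime dividing |R|, and let S be a subring of R. Then |Z(S,R)|/|S| + p(|S| − |Z(S,R)|)/(|S|·|R|) ≤ Pr(S, R) ≤ ((p − 1)|Z(S,R)| + |S|)/(p·|S|). -/

import Mathlib

open scoped Pointwise

/-- The probability that a randomly chosen pair, one element from `S` and one from `T`,
commutes (multiplicatively). For a subring `S` of a finite ring `R` this gives
`Pr(S, R) = relCommProb R S Set.univ`, `Pr(R) = relCommProb R Set.univ Set.univ`, etc. -/
noncomputable def relCommProb (R : Type*) [NonUnitalRing R] (S T : Set R) : ℚ :=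
  (Nat.card {p : S × T // (p.1 : R) * (p.2 : R) = (p.2 : R) * (p.1 : R)} : ℚ) /
    ((Nat.card S : ℚ) * (Nat.card T : ℚ))

/-- `C_S(r)`: the centralizer of `r` in the subring `S`, as an additive subgroup of `R`.
Taking `S = ⊤` gives `C_R(r)`. -/
def centIn {R : Type*} [NonUnitalRing R] (S : NonUnitalSubring R) (r : R) : AddSubgroup R where
  carrier := {x | x ∈ S ∧ x * r = r * x}
  zero_mem' := ⟨S.zero_mem, by rw [zero_mul, mul_zero]⟩
  add_mem' := by
    rintro a b ⟨ha, ha'⟩ ⟨hb, hb'⟩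
    exact ⟨S.add_mem ha hb, by rw [add_mul, mul_add, ha', hb']⟩
  neg_mem' := by
    rintro a ⟨ha, ha'⟩
    exact ⟨S.neg_mem ha, by rw [neg_mul, mul_neg, ha']⟩

/-- `Z(S, R)`: the elements of the subring `S` commuting with every element of `R`,
as an additive subgroup of `R`.  Taking `S = ⊤` gives the center `Z(R)`. -/
def zCenter {R : Type*} [NonUnitalRing R] (S : NonUnitalSubring R) : AddSubgroup R where
  carrier := {x | x ∈ S ∧ ∀ r : R, x * r = r * x}
  zero_mem' := ⟨S.zero_mem, fun r => by rw [zero_mul, mul_zero]⟩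
  add_mem' := by
    rintro a b ⟨ha, ha'⟩ ⟨hb, hb'⟩
    exact ⟨S.add_mem ha hb, fun r => by rw [add_mul, mul_add, ha' r, hb' r]⟩
  neg_mem' := by
    rintro a ⟨ha, ha'⟩
    exact ⟨S.neg_mem ha, fun r => by rw [neg_mul, mul_neg, ha' r]⟩

/-- `K(S, R)`: the set of additive commutators `s*r - r*s` with `s ∈ S`, `r ∈ R`. -/
def kSet {R : Type*} [NonUnitalRing R] (S : NonUnitalSubring R) : Set R :=
  {x | ∃ s ∈ S, ∃ r : R, x = s * r - r * s}

/-- `[S, R]`: the additive subgroup of `(R, +)` generated by `K(S, R)`. -/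
def commSub {R : Type*} [NonUnitalRing R] (S : NonUnitalSubring R) : AddSubgroup R :=
  AddSubgroup.closure (kSet S)

/-- `[x, R]`: the additive subgroup of all commutators `x*y - y*x`, `y ∈ R`. -/
def elemComm {R : Type*} [NonUnitalRing R] (x : R) : AddSubgroup R where
  carrier := {z | ∃ y : R, z = x * y - y * x}
  zero_mem' := ⟨0, by simp⟩
  add_mem' := by
    rintro a b ⟨y, rfl⟩ ⟨z, rfl⟩
    exact ⟨y + z, by rw [mul_add, add_mul]; abel⟩
  neg_mem' := by
    rintro a ⟨y, rfl⟩
    exact ⟨-y, by rw [mul_neg, neg_mul]; abel⟩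
def myC {R : Type*} [NonUnitalRing R] (s : R) : AddSubgroup R where
  carrier := {r | s * r = r * s}
  zero_mem' := by simp
  add_mem' := by
    intro a b ha hb
    simp only [Set.mem_setOf_eq] at *
    rw [mul_add, add_mul, ha, hb]
  neg_mem' := by
    intro a ha
    simp only [Set.mem_setOf_eq] at *
    rw [mul_neg, neg_mul, ha]

lemma nat_card_sigma {ι : Type*} [Fintype ι] (f : ι → Type*) [∀ i, Finite (f i)] :
    Nat.card (Σ i, f i) = ∑ i, Nat.card (f i) := by
  have : ∀ i, Fintype (f i) := fun i => Fintype.ofFinite _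
  simp [Nat.card_eq_fintype_card, Fintype.card_sigma]

/-- If `p` is the smallest prime dividing `|R|` and `S` is a subring of `R`, then
`|Z(S,R)|/|S| + p(|S| − |Z(S,R)|)/(|S||R|) ≤ Pr(S, R) ≤ ((p−1)|Z(S,R)| + |S|)/(p|S|)`. -/
theorem relCommProb_bounds {R : Type*} [NonUnitalRing R] [Fintype R] (hR : 1 < Nat.card R)
    (p : ℕ) (hp : p.Prime) (hdvd : p ∣ Nat.card R)
    (hmin : ∀ q : ℕ, q.Prime → q ∣ Nat.card R → p ≤ q) (S : NonUnitalSubring R) :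
    (Nat.card (zCenter S) : ℚ) / (Nat.card S : ℚ) +
        (p : ℚ) * ((Nat.card S : ℚ) - (Nat.card (zCenter S) : ℚ)) /
          ((Nat.card S : ℚ) * (Nat.card R : ℚ)) ≤
      relCommProb R (S : Set R) Set.univ ∧
    relCommProb R (S : Set R) Set.univ ≤
      (((p : ℚ) - 1) * (Nat.card (zCenter S) : ℚ) + (Nat.card S : ℚ)) /
        ((p : ℚ) * (Nat.card S : ℚ)) := by
  classical
  set n := Nat.card R with hn
  -- the number of commuting pairs
  set T := Nat.card {q : ↥(S : Set R) × ↥(Set.univ : Set R) //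
      (q.1 : R) * (q.2 : R) = (q.2 : R) * (q.1 : R)} with hTdef
  have hT : T = ∑ s : ↥(S : Set R), Nat.card {r : R // (s : R) * r = r * (s : R)} := by
    have e2 : ∀ s : ↥(S : Set R), {b : ↥(Set.univ : Set R) // (s : R) * b = (b : R) * s}
        ≃ {r : R // (s : R) * r = r * (s : R)} := fun s =>
      (Equiv.Set.univ R).subtypeEquiv (fun r => Iff.rfl)
    rw [hTdef, Nat.card_congr ((Equiv.subtypeProdEquivSigmaSubtype
      (fun (a : ↥(S : Set R)) (b : ↥(Set.univ : Set R)) => (a : R) * b = (b : R) * a)).trans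
      (Equiv.sigmaCongrRight e2))]
    exact nat_card_sigma _
  -- per-element cardinality facts
  have hmem : ∀ s : R, ∀ r : R, r ∈ myC s ↔ s * r = r * s := fun s r => Iff.rfl
  have hcardC : ∀ s : R, Nat.card {r : R // s * r = r * s} = Nat.card (myC s) := fun s => rfl
  have hcentral : ∀ s : R, (∀ r : R, s * r = r * s) →
      Nat.card {r : R // s * r = r * s} = n := by
    intro s hs
    rw [hn, Nat.card_congr (Equiv.subtypeUnivEquiv hs)]
  have hnoncentral : ∀ s : R, ¬ (∀ r : R, s * r = r * s) →
      p ≤ Nat.card (myC s) ∧ p * Nat.card (myC s) ≤ n := by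
    intro s hs
    have hdvdC : Nat.card (myC s) ∣ n := by
      have := (myC s).card_mul_index
      exact ⟨(myC s).index, this.symm⟩
    have hs0 : s ≠ 0 := by
      rintro rfl
      exact hs fun r => by rw [zero_mul, mul_zero]
    have hsC : s ∈ myC s := rfl
    have hne : (myC s) ≠ ⊥ := by
      intro h
      rw [h, AddSubgroup.mem_bot] at hsC
      exact hs0 hsC
    have hcard1 : 1 < Nat.card (myC s) := (AddSubgroup.one_lt_card_iff_ne_bot (H := myC s)).mpr hne
    have hple : p ≤ Nat.card (myC s) := by
      have hq := Nat.minFac_prime hcard1.ne'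
      exact le_trans (hmin _ hq ((Nat.minFac_dvd _).trans hdvdC))
        (Nat.minFac_le (by omega))
    refine ⟨hple, ?_⟩
    -- index is > 1 and divides n
    obtain ⟨r, hr⟩ := not_forall.mp hs
    have htop : (myC s) ≠ ⊤ := by
      intro h
      exact hr ((hmem s r).mp (h ▸ AddSubgroup.mem_top r))
    have hidx1 : (myC s).index ≠ 1 := fun h => htop (AddSubgroup.index_eq_one.mp h)
    have hidx0 : (myC s).index ≠ 0 := by
      intro h
      have := (myC s).card_mul_index
      rw [h, mul_zero] at this
      omega
    have hdvdI : (myC s).index ∣ n := by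
      have := (myC s).card_mul_index
      exact ⟨Nat.card (myC s), by rw [mul_comm]; exact this.symm⟩
    have hpI : p ≤ (myC s).index := by
      have hq := Nat.minFac_prime hidx1
      exact le_trans (hmin _ hq ((Nat.minFac_dvd _).trans hdvdI))
        (Nat.minFac_le (by omega))
    calc p * Nat.card (myC s) ≤ (myC s).index * Nat.card (myC s) :=
          Nat.mul_le_mul_right _ hpI
      _ = n := by rw [mul_comm]; exact (myC s).card_mul_index
  -- split the sum according to centrality
  set Pred : ↥(S : Set R) → Prop := fun s => ∀ r : R, (s : R) * r = r * (s : R) with hPred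
  set f : ↥(S : Set R) → ℕ := fun s => Nat.card {r : R // (s : R) * r = r * (s : R)} with hf
  set a := (Finset.univ.filter Pred).card with ha
  set b := (Finset.univ.filter (fun s => ¬ Pred s)).card with hb
  have hzcard : Nat.card (zCenter S) = a := by
    have e : {s : ↥(S : Set R) // Pred s} ≃ ↥(zCenter S) :=
      { toFun := fun x => ⟨x.1, x.1.2, x.2⟩
        invFun := fun x => ⟨⟨x.1, x.2.1⟩, x.2.2⟩
        left_inv := fun _ => rfl
        right_inv := fun _ => rfl }
    rw [Nat.card_congr e.symm, Nat.card_eq_fintype_card, Fintype.card_subtype]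
  have hab : a + b = Nat.card ↥(S : Set R) := by
    rw [Nat.card_eq_fintype_card]
    exact Finset.card_filter_add_card_filter_not _
  have hsum1 : ∑ s ∈ Finset.univ.filter Pred, f s = a * n := by
    calc ∑ s ∈ Finset.univ.filter Pred, f s = ∑ _s ∈ Finset.univ.filter Pred, n :=
          Finset.sum_congr rfl (fun s hs => hcentral (s : R) (Finset.mem_filter.mp hs).2)
      _ = a * n := by rw [Finset.sum_const, smul_eq_mul]
  have hsum2 : b * p ≤ ∑ s ∈ Finset.univ.filter (fun s => ¬ Pred s), f s := by
    have := Finset.card_nsmul_le_sum (Finset.univ.filter (fun s => ¬ Pred s)) f p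
      (fun s hs => (hnoncentral (s : R) (Finset.mem_filter.mp hs).2).1)
    rw [smul_eq_mul] at this; exact this
  have hsum3 : ∑ s ∈ Finset.univ.filter (fun s => ¬ Pred s), p * f s ≤ b * n := by
    have := Finset.sum_le_card_nsmul (Finset.univ.filter (fun s => ¬ Pred s))
      (fun s => p * f s) n
      (fun s hs => (hnoncentral (s : R) (Finset.mem_filter.mp hs).2).2)
    rw [smul_eq_mul] at this; exact this
  have hsplit : ∑ s ∈ Finset.univ.filter Pred, f s
      + ∑ s ∈ Finset.univ.filter (fun s => ¬ Pred s), f s = T :=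
    (Finset.sum_filter_add_sum_filter_not Finset.univ Pred f).trans hT.symm
  have hTlow : a * n + b * p ≤ T := by
    rw [← hsplit]
    exact Nat.add_le_add hsum1.ge hsum2
  have hThigh : p * T ≤ p * (a * n) + b * n := by
    rw [← hsplit, mul_add]
    refine Nat.add_le_add (le_of_eq (by rw [hsum1])) ?_
    rw [Finset.mul_sum]
    exact hsum3
  -- cast everything to ℚ
  have hSne : Nonempty ↥(S : Set R) := ⟨⟨0, S.zero_mem⟩⟩
  have hSpos : 0 < Nat.card ↥(S : Set R) := Nat.card_pos
  have hcardS : Nat.card ↥S = Nat.card ↥(S : Set R) := rfl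
  have hcarduniv : Nat.card ↥(Set.univ : Set R) = n := Nat.card_congr (Equiv.Set.univ R)
  have hTval : relCommProb R (S : Set R) Set.univ
      = (T : ℚ) / ((Nat.card ↥(S : Set R) : ℚ) * (n : ℚ)) := by
    rw [relCommProb, ← hTdef, hcarduniv]
  have hsQ : (0 : ℚ) < (Nat.card ↥(S : Set R) : ℚ) := by exact_mod_cast hSpos
  have hnQ : (0 : ℚ) < (n : ℚ) := by exact_mod_cast (by omega : 0 < n)
  have hpQ : (0 : ℚ) < (p : ℚ) := by exact_mod_cast hp.pos
  have habQ : (a : ℚ) + (b : ℚ) = (Nat.card ↥(S : Set R) : ℚ) := by exact_mod_cast hab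
  have hTlowQ : (a : ℚ) * (n : ℚ) + (b : ℚ) * (p : ℚ) ≤ (T : ℚ) := by exact_mod_cast hTlow
  have hThighQ : (p : ℚ) * (T : ℚ) ≤ (p : ℚ) * ((a : ℚ) * (n : ℚ)) + (b : ℚ) * (n : ℚ) := by
    exact_mod_cast hThigh
  rw [hcardS, hzcard, hTval]
  set sQ : ℚ := (Nat.card ↥(S : Set R) : ℚ) with hsQdef
  set nQ : ℚ := (n : ℚ) with hnQdef
  set pQ : ℚ := (p : ℚ) with hpQdef
  set aQ : ℚ := (a : ℚ) with haQdef
  set bQ : ℚ := (b : ℚ) with hbQdef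
  set TQ : ℚ := (T : ℚ) with hTQdef
  constructor
  · have h2 : sQ - aQ = bQ := by linarith
    have heq : aQ / sQ + pQ * (sQ - aQ) / (sQ * nQ)
        = (aQ * nQ + bQ * pQ) / (sQ * nQ) := by
      rw [h2]
      field_simp
    rw [heq]
    exact (div_le_div_iff_of_pos_right (mul_pos hsQ hnQ)).mpr hTlowQ
  · rw [div_le_div_iff₀ (mul_pos hsQ hnQ) (mul_pos hpQ hsQ)]
    nlinarith [mul_le_mul_of_nonneg_right hThighQ hsQ.le, mul_pos hnQ hsQ]
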